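/- For all integers p ≥ 0 and q with |q| ≤ p, the polynomial function T_{p,0}^q : ℝ³ → ℂ is harmonic: ∂²T_{p,0}^q/∂x² + ∂²T_{p,0}^q/∂y² + ∂²T_{p,0}^q/∂z² = 0 at every point of ℝ³. -/

import Mathlib

/-- The Cartesian polynomial `T_{p,m}^q(x,y,z)`, the complex conjugate of
`R_{p,m}^q(x) = ‖x‖^{2m+p} Y_p^q(x/‖x‖) / C_Y(p,q)` (a regular solid harmonic
weighted by `‖x‖^{2m}`). Here `s = 1` if `q ≥ 0` and `s = -1` if `q < 0`. -/
noncomputable def solidT (p m : ℕ) (q : ℤ) (x y z : ℝ) : ℂ :=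
  ((-1 : ℂ) ^ q.natAbs / 2 ^ p) *
    ((x : ℂ) - (if 0 ≤ q then (1 : ℂ) else -1) * Complex.I * (y : ℂ)) ^ q.natAbs *
    ∑ ν ∈ Finset.range ((p - q.natAbs) / 2 + 1),
      ((-1 : ℂ) ^ ν * (Nat.factorial (2 * p - 2 * ν) : ℂ) /
          ((Nat.factorial ν : ℂ) * (Nat.factorial (p - ν) : ℂ) *
            (Nat.factorial (p - q.natAbs - 2 * ν) : ℂ))) *
        (((x ^ 2 + y ^ 2 + z ^ 2 : ℝ) : ℂ)) ^ (m + ν) * (z : ℂ) ^ (p - q.natAbs - 2 * ν)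

/-- The integral `I_m(p,q,k) = ∫_{[-1,1]³} T_{p,m}^q(x₁,x₂,x₃) φ^{k₁}(x₁) φ^{k₂}(x₂) φ^{k₃}(x₃) dx`. -/
noncomputable def solidI (φ : ℕ → Polynomial ℝ) (p m : ℕ) (q : ℤ) (k₁ k₂ k₃ : ℕ) : ℂ :=
  ∫ x₁ in (-1:ℝ)..1, ∫ x₂ in (-1:ℝ)..1, ∫ x₃ in (-1:ℝ)..1,
    solidT p m q x₁ x₂ x₃ *
      (((φ k₁).eval x₁ * (φ k₂).eval x₂ * (φ k₃).eval x₃ : ℝ) : ℂ)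

namespace SolidAux

/-- Single-variable building block `(α + β t)^a (γ + t²)^ν t^b`. -/
noncomputable def FT (α β γ : ℂ) (a ν b : ℕ) (t : ℝ) : ℂ :=
  (α + β * t) ^ a * (γ + (t : ℂ) ^ 2) ^ ν * (t : ℂ) ^ b

/-- First derivative of `FT`. -/
noncomputable def FT1 (α β γ : ℂ) (a ν b : ℕ) (t : ℝ) : ℂ :=
  ((a : ℂ) * β) * FT α β γ (a - 1) ν b t + (2 * (ν : ℂ)) * FT α β γ a (ν - 1) (b + 1) t
    + (b : ℂ) * FT α β γ a ν (b - 1) t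

/-- Second derivative of `FT`. -/
noncomputable def FT2 (α β γ : ℂ) (a ν b : ℕ) (t : ℝ) : ℂ :=
  ((a : ℂ) * β) * FT1 α β γ (a - 1) ν b t + (2 * (ν : ℂ)) * FT1 α β γ a (ν - 1) (b + 1) t
    + (b : ℂ) * FT1 α β γ a ν (b - 1) t

lemma hasDerivAt_ofReal (x : ℝ) : HasDerivAt (fun t : ℝ => (t : ℂ)) 1 x := by
  have := Complex.ofRealCLM.hasDerivAt (x := x)
  simp at this
  exact this

lemma hasDerivAt_pow_comp {g : ℝ → ℂ} {g' : ℂ} {x : ℝ} (n : ℕ) (hg : HasDerivAt g g' x) :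
    HasDerivAt (fun t => g t ^ n) ((n : ℂ) * g x ^ (n - 1) * g') x := by
  have := (hasDerivAt_pow n (g x)).comp x hg
  exact this

lemma hasDerivAt_FT (α β γ : ℂ) (a ν b : ℕ) (x : ℝ) :
    HasDerivAt (FT α β γ a ν b) (FT1 α β γ a ν b x) x := by
  have h0 : HasDerivAt (fun t : ℝ => (t : ℂ)) 1 x := hasDerivAt_ofReal x
  have h1 : HasDerivAt (fun t : ℝ => α + β * (t : ℂ)) β x := by
    simpa using (h0.const_mul β).const_add α
  have h2 := hasDerivAt_pow_comp a h1
  have h3 : HasDerivAt (fun t : ℝ => γ + (t : ℂ) ^ 2) (2 * (x : ℂ)) x := by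
    have := hasDerivAt_pow_comp 2 h0
    simpa using this.const_add γ
  have h4 := hasDerivAt_pow_comp ν h3
  have h5 := hasDerivAt_pow_comp b h0
  have h := (h2.mul h4).mul h5
  refine h.congr_deriv ?_
  simp only [FT1, FT, Pi.mul_apply]
  ring

lemma hasDerivAt_FT1 (α β γ : ℂ) (a ν b : ℕ) (x : ℝ) :
    HasDerivAt (FT1 α β γ a ν b) (FT2 α β γ a ν b x) x := by
  have h1 := (hasDerivAt_FT α β γ (a - 1) ν b x).const_mul ((a : ℂ) * β)
  have h2 := (hasDerivAt_FT α β γ a (ν - 1) (b + 1) x).const_mul (2 * (ν : ℂ))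
  have h3 := (hasDerivAt_FT α β γ a ν (b - 1) x).const_mul ((b : ℂ))
  exact (h1.add h2).add h3

lemma iteratedDeriv_two_sum (M : ℕ) (C : ℕ → ℂ) (B : ℕ → ℕ) (α β γ : ℂ) (a : ℕ) (x : ℝ) :
    iteratedDeriv 2 (fun t : ℝ => ∑ ν ∈ Finset.range M, C ν * FT α β γ a ν (B ν) t) x
      = ∑ ν ∈ Finset.range M, C ν * FT2 α β γ a ν (B ν) x := by
  have hd1 : ∀ u : ℝ,
      HasDerivAt (fun t : ℝ => ∑ ν ∈ Finset.range M, C ν * FT α β γ a ν (B ν) t)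
        (∑ ν ∈ Finset.range M, C ν * FT1 α β γ a ν (B ν) u) u := fun u =>
    HasDerivAt.fun_sum fun ν _ => (hasDerivAt_FT α β γ a ν (B ν) u).const_mul (C ν)
  have hd2 : HasDerivAt (fun u : ℝ => ∑ ν ∈ Finset.range M, C ν * FT1 α β γ a ν (B ν) u)
      (∑ ν ∈ Finset.range M, C ν * FT2 α β γ a ν (B ν) x) x :=
    HasDerivAt.fun_sum fun ν _ => (hasDerivAt_FT1 α β γ a ν (B ν) x).const_mul (C ν)
  have e1 : deriv (fun t : ℝ => ∑ ν ∈ Finset.range M, C ν * FT α β γ a ν (B ν) t)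
      = fun u => ∑ ν ∈ Finset.range M, C ν * FT1 α β γ a ν (B ν) u :=
    funext fun u => (hd1 u).deriv
  rw [show (2 : ℕ) = 1 + 1 from rfl, iteratedDeriv_succ, iteratedDeriv_one, e1]
  exact hd2.deriv

/-- The pointwise Laplacian of a single solid-harmonic term. -/
lemma keyterm (c : ℂ) (hc : c * c = -1) (a ν b : ℕ) (x y z : ℝ) :
    (z : ℂ) ^ b * FT2 (-(c * (y : ℂ))) 1 ((y : ℂ) ^ 2 + (z : ℂ) ^ 2) a ν 0 x
      + (z : ℂ) ^ b * FT2 (x : ℂ) (-c) ((x : ℂ) ^ 2 + (z : ℂ) ^ 2) a ν 0 y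
      + FT2 ((x : ℂ) - c * (y : ℂ)) 0 ((x : ℂ) ^ 2 + (y : ℂ) ^ 2) a ν b z
    = 2 * (ν : ℂ) * (2 * (ν : ℂ) + 2 * (a : ℂ) + 2 * (b : ℂ) + 1)
        * ((x : ℂ) - c * (y : ℂ)) ^ a * ((x : ℂ) ^ 2 + (y : ℂ) ^ 2 + (z : ℂ) ^ 2) ^ (ν - 1)
        * (z : ℂ) ^ b
      + (b : ℂ) * ((b : ℂ) - 1) * ((x : ℂ) - c * (y : ℂ)) ^ a
        * ((x : ℂ) ^ 2 + (y : ℂ) ^ 2 + (z : ℂ) ^ 2) ^ ν * (z : ℂ) ^ (b - 2) := by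
  have hA1 : ((a : ℂ)) * (((x : ℂ) - c * (y : ℂ)) ^ (a - 1) * ((x : ℂ) - c * (y : ℂ)))
      = (a : ℂ) * ((x : ℂ) - c * (y : ℂ)) ^ a := by
    cases a with
    | zero => simp
    | succ n => rw [Nat.succ_sub_one, pow_succ]
  have hA3 : ((ν : ℂ)) * ((ν - 1 : ℕ) : ℂ)
        * (((x : ℂ) ^ 2 + (y : ℂ) ^ 2 + (z : ℂ) ^ 2) ^ (ν - 2)
          * ((x : ℂ) ^ 2 + (y : ℂ) ^ 2 + (z : ℂ) ^ 2))
      = (ν : ℂ) * ((ν : ℂ) - 1) * ((x : ℂ) ^ 2 + (y : ℂ) ^ 2 + (z : ℂ) ^ 2) ^ (ν - 1) := by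
    match ν with
    | 0 => simp
    | 1 => simp
    | (n + 2) =>
      simp only [show n + 2 - 1 = n + 1 by omega, show n + 2 - 2 = n by omega]
      push_cast
      ring
  have hB1 : ((b : ℂ)) * ((b - 1 : ℕ) : ℂ) = (b : ℂ) * ((b : ℂ) - 1) := by
    cases b with
    | zero => simp
    | succ n => push_cast [Nat.succ_sub_one]; ring
  have hB2 : ((b : ℂ)) * (z : ℂ) ^ (b - 1 + 1) = (b : ℂ) * (z : ℂ) ^ b := by
    cases b with
    | zero => simp
    | succ n => rw [Nat.succ_sub_one]
  have e1 : a - 1 - 1 = a - 2 := by omega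
  have e2 : ν - 1 - 1 = ν - 2 := by omega
  have e3 : b - 1 - 1 = b - 2 := by omega
  simp only [FT2, FT1, FT, e1, e2, e3, Nat.add_sub_cancel]
  push_cast
  linear_combination (norm := (push_cast; ring1))
    ((a : ℂ) * ((a - 1 : ℕ) : ℂ) * ((x : ℂ) - c * (y : ℂ)) ^ (a - 2)
        * ((x : ℂ) ^ 2 + (y : ℂ) ^ 2 + (z : ℂ) ^ 2) ^ ν * (z : ℂ) ^ b) * hc
    + (4 * (ν : ℂ) * ((x : ℂ) ^ 2 + (y : ℂ) ^ 2 + (z : ℂ) ^ 2) ^ (ν - 1) * (z : ℂ) ^ b) * hA1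
    + (4 * ((x : ℂ) - c * (y : ℂ)) ^ a * (z : ℂ) ^ b) * hA3
    + (((x : ℂ) - c * (y : ℂ)) ^ a * ((x : ℂ) ^ 2 + (y : ℂ) ^ 2 + (z : ℂ) ^ 2) ^ ν
        * (z : ℂ) ^ (b - 2)) * hB1
    + (2 * (ν : ℂ) * ((x : ℂ) - c * (y : ℂ)) ^ a
        * ((x : ℂ) ^ 2 + (y : ℂ) ^ 2 + (z : ℂ) ^ 2) ^ (ν - 1)) * hB2

/-- The telescoping coefficient identity. -/
lemma keyid (a ν k : ℕ) :
    ((-1 : ℂ) ^ (ν + 1) * (Nat.factorial (2 * a + 2 * ν + 2 * k + 2) : ℂ) /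
        ((Nat.factorial (ν + 1) : ℂ) * (Nat.factorial (a + ν + k + 1) : ℂ)
          * (Nat.factorial k : ℂ)))
      * (2 * ((ν : ℂ) + 1) * (2 * ((ν : ℂ) + 1) + 2 * (a : ℂ) + 2 * (k : ℂ) + 1))
    + ((-1 : ℂ) ^ ν * (Nat.factorial (2 * a + 2 * ν + 2 * k + 4) : ℂ) /
        ((Nat.factorial ν : ℂ) * (Nat.factorial (a + ν + k + 2) : ℂ)
          * (Nat.factorial (k + 2) : ℂ)))
      * (((k : ℂ) + 2) * (((k : ℂ) + 2) - 1)) = 0 := by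
  have h1 : (Nat.factorial (2 * a + 2 * ν + 2 * k + 4) : ℂ)
      = (2 * (a : ℂ) + 2 * ν + 2 * k + 4) * (2 * (a : ℂ) + 2 * ν + 2 * k + 3)
        * (Nat.factorial (2 * a + 2 * ν + 2 * k + 2) : ℂ) := by
    rw [show 2 * a + 2 * ν + 2 * k + 4 = (2 * a + 2 * ν + 2 * k + 2) + 1 + 1 by ring,
      Nat.factorial_succ, Nat.factorial_succ]
    push_cast
    ring
  have h2 : (Nat.factorial (a + ν + k + 2) : ℂ)
      = ((a : ℂ) + ν + k + 2) * (Nat.factorial (a + ν + k + 1) : ℂ) := by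
    rw [show a + ν + k + 2 = (a + ν + k + 1) + 1 by ring, Nat.factorial_succ]
    push_cast
    ring
  have h3 : (Nat.factorial (k + 2) : ℂ)
      = ((k : ℂ) + 2) * ((k : ℂ) + 1) * (Nat.factorial k : ℂ) := by
    rw [show k + 2 = k + 1 + 1 by ring, Nat.factorial_succ, Nat.factorial_succ]
    push_cast
    ring
  have h4 : (Nat.factorial (ν + 1) : ℂ) = ((ν : ℂ) + 1) * (Nat.factorial ν : ℂ) := by
    rw [Nat.factorial_succ]
    push_cast
    ring
  have n1 : (Nat.factorial ν : ℂ) ≠ 0 := Nat.cast_ne_zero.mpr (Nat.factorial_pos ν).ne'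
  have n2 : (Nat.factorial (a + ν + k + 1) : ℂ) ≠ 0 :=
    Nat.cast_ne_zero.mpr (Nat.factorial_pos _).ne'
  have n3 : (Nat.factorial k : ℂ) ≠ 0 := Nat.cast_ne_zero.mpr (Nat.factorial_pos _).ne'
  have m1 : ((ν : ℂ) + 1) ≠ 0 := by
    have : (((ν + 1 : ℕ)) : ℂ) ≠ 0 := Nat.cast_ne_zero.mpr (Nat.succ_ne_zero ν)
    push_cast at this
    exact this
  have m2 : ((a : ℂ) + ν + k + 2) ≠ 0 := by
    have : (((a + ν + k + 2 : ℕ)) : ℂ) ≠ 0 := Nat.cast_ne_zero.mpr (by omega)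
    push_cast at this
    convert this using 2
  have m3 : ((k : ℂ) + 2) ≠ 0 := by
    have : (((k + 2 : ℕ)) : ℂ) ≠ 0 := Nat.cast_ne_zero.mpr (by omega)
    push_cast at this
    exact this
  have m4 : ((k : ℂ) + 1) ≠ 0 := by
    have : (((k + 1 : ℕ)) : ℂ) ≠ 0 := Nat.cast_ne_zero.mpr (Nat.succ_ne_zero k)
    push_cast at this
    exact this
  rw [h1, h2, h3, h4, pow_succ]
  field_simp
  ring

lemma main_aux (p a : ℕ) (ha : a ≤ p) (c K : ℂ) (hc : c * c = -1) (x y z : ℝ)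
    (d : ℕ → ℂ)
    (hd : ∀ ν, d ν = ((-1 : ℂ) ^ ν * (Nat.factorial (2 * p - 2 * ν) : ℂ) /
      ((Nat.factorial ν : ℂ) * (Nat.factorial (p - ν) : ℂ)
        * (Nat.factorial (p - a - 2 * ν) : ℂ)))) :
    (∑ ν ∈ Finset.range ((p - a) / 2 + 1),
        (K * d ν * (z : ℂ) ^ (p - a - 2 * ν))
          * FT2 (-(c * (y : ℂ))) 1 ((y : ℂ) ^ 2 + (z : ℂ) ^ 2) a ν 0 x)
      + (∑ ν ∈ Finset.range ((p - a) / 2 + 1),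
        (K * d ν * (z : ℂ) ^ (p - a - 2 * ν))
          * FT2 ((x : ℂ)) (-c) ((x : ℂ) ^ 2 + (z : ℂ) ^ 2) a ν 0 y)
      + (∑ ν ∈ Finset.range ((p - a) / 2 + 1),
        (K * d ν)
          * FT2 ((x : ℂ) - c * (y : ℂ)) 0 ((x : ℂ) ^ 2 + (y : ℂ) ^ 2) a ν (p - a - 2 * ν) z)
      = 0 := by
  rw [← Finset.sum_add_distrib, ← Finset.sum_add_distrib]
  have step : ∀ ν ∈ Finset.range ((p - a) / 2 + 1),
      (K * d ν * (z : ℂ) ^ (p - a - 2 * ν))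
          * FT2 (-(c * (y : ℂ))) 1 ((y : ℂ) ^ 2 + (z : ℂ) ^ 2) a ν 0 x
        + (K * d ν * (z : ℂ) ^ (p - a - 2 * ν))
          * FT2 ((x : ℂ)) (-c) ((x : ℂ) ^ 2 + (z : ℂ) ^ 2) a ν 0 y
        + (K * d ν)
          * FT2 ((x : ℂ) - c * (y : ℂ)) 0 ((x : ℂ) ^ 2 + (y : ℂ) ^ 2) a ν (p - a - 2 * ν) z
      = K * d ν * (2 * (ν : ℂ) * (2 * (ν : ℂ) + 2 * (a : ℂ) + 2 * (((p - a - 2 * ν : ℕ)) : ℂ) + 1)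
            * ((x : ℂ) - c * (y : ℂ)) ^ a
            * ((x : ℂ) ^ 2 + (y : ℂ) ^ 2 + (z : ℂ) ^ 2) ^ (ν - 1)
            * (z : ℂ) ^ (p - a - 2 * ν))
        + K * d ν * ((((p - a - 2 * ν : ℕ)) : ℂ) * ((((p - a - 2 * ν : ℕ)) : ℂ) - 1)
            * ((x : ℂ) - c * (y : ℂ)) ^ a
            * ((x : ℂ) ^ 2 + (y : ℂ) ^ 2 + (z : ℂ) ^ 2) ^ ν
            * (z : ℂ) ^ (p - a - 2 * ν - 2)) := by
    intro ν _
    have h := keyterm c hc a ν (p - a - 2 * ν) x y z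
    linear_combination (K * d ν) * h
  rw [Finset.sum_congr rfl step, Finset.sum_add_distrib, Finset.sum_range_succ',
    Finset.sum_range_succ]
  simp only [Nat.cast_zero, mul_zero, zero_mul, add_zero, zero_add]
  have hb2 : p - a - 2 * ((p - a) / 2) = 0 ∨ p - a - 2 * ((p - a) / 2) = 1 := by omega
  have hBN : K * d ((p - a) / 2)
      * ((((p - a - 2 * ((p - a) / 2) : ℕ)) : ℂ) * ((((p - a - 2 * ((p - a) / 2) : ℕ)) : ℂ) - 1)
        * ((x : ℂ) - c * (y : ℂ)) ^ a
        * ((x : ℂ) ^ 2 + (y : ℂ) ^ 2 + (z : ℂ) ^ 2) ^ ((p - a) / 2)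
        * (z : ℂ) ^ (p - a - 2 * ((p - a) / 2) - 2)) = 0 := by
    rcases hb2 with h | h <;> rw [h] <;> norm_num
  rw [hBN, add_zero, ← Finset.sum_add_distrib]
  apply Finset.sum_eq_zero
  intro ν hν
  rw [Finset.mem_range] at hν
  obtain ⟨k, hk⟩ : ∃ k, p - a - 2 * ν = k + 2 := ⟨p - a - 2 * ν - 2, by omega⟩
  have h1 : p - a - 2 * (ν + 1) = k := by omega
  have h3 : p - a - 2 * ν - 2 = k := by omega
  have h4 : 2 * p - 2 * (ν + 1) = 2 * a + 2 * ν + 2 * k + 2 := by omega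
  have h5 : p - (ν + 1) = a + ν + k + 1 := by omega
  have h6 : 2 * p - 2 * ν = 2 * a + 2 * ν + 2 * k + 4 := by omega
  have h7 : p - ν = a + ν + k + 2 := by omega
  have h8 : ν + 1 - 1 = ν := by omega
  simp only [hd, hk, h1, h3, h4, h5, h6, h7, h8]
  have hkey := keyid a ν k
  linear_combination (norm := (push_cast; ring1))
    (K * ((x : ℂ) - c * (y : ℂ)) ^ a * ((x : ℂ) ^ 2 + (y : ℂ) ^ 2 + (z : ℂ) ^ 2) ^ ν
      * (z : ℂ) ^ k) * hkey

end SolidAux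

/-- `T_{p,0}^q` (the conjugate regular solid harmonic
`‖x‖^p Y_p^q(x/‖x‖)/C_Y(p,q)`) is harmonic on `ℝ³`:
`∂²T/∂x² + ∂²T/∂y² + ∂²T/∂z² = 0` everywhere. -/
theorem solidT_harmonic (p : ℕ) (q : ℤ) (hq : q.natAbs ≤ p) :
    ∀ x y z : ℝ,
      iteratedDeriv 2 (fun t : ℝ => solidT p 0 q t y z) x
        + iteratedDeriv 2 (fun t : ℝ => solidT p 0 q x t z) y
        + iteratedDeriv 2 (fun t : ℝ => solidT p 0 q x y t) z = 0 := by
  intro x y z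
  classical
  set c : ℂ := (if 0 ≤ q then (1 : ℂ) else -1) * Complex.I with hcdef
  have hc : c * c = -1 := by
    rw [hcdef]
    split_ifs <;> linear_combination Complex.I_mul_I
  set K : ℂ := ((-1 : ℂ) ^ q.natAbs / 2 ^ p) with hK
  set d : ℕ → ℂ := fun ν => ((-1 : ℂ) ^ ν * (Nat.factorial (2 * p - 2 * ν) : ℂ) /
      ((Nat.factorial ν : ℂ) * (Nat.factorial (p - ν) : ℂ)
        * (Nat.factorial (p - q.natAbs - 2 * ν) : ℂ))) with hdd
  have ex : iteratedDeriv 2 (fun t : ℝ => solidT p 0 q t y z) x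
      = ∑ ν ∈ Finset.range ((p - q.natAbs) / 2 + 1),
          (K * d ν * (z : ℂ) ^ (p - q.natAbs - 2 * ν))
            * SolidAux.FT2 (-(c * (y : ℂ))) 1 ((y : ℂ) ^ 2 + (z : ℂ) ^ 2) q.natAbs ν 0 x := by
    have e : (fun t : ℝ => solidT p 0 q t y z)
        = fun t : ℝ => ∑ ν ∈ Finset.range ((p - q.natAbs) / 2 + 1),
            (K * d ν * (z : ℂ) ^ (p - q.natAbs - 2 * ν))
              * SolidAux.FT (-(c * (y : ℂ))) 1 ((y : ℂ) ^ 2 + (z : ℂ) ^ 2) q.natAbs ν 0 t := by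
      funext t
      simp only [solidT, SolidAux.FT, hcdef, hK, hdd]
      rw [Finset.mul_sum]
      refine Finset.sum_congr rfl fun ν _ => ?_
      push_cast
      ring
    rw [e]
    exact SolidAux.iteratedDeriv_two_sum _ _ _ _ _ _ _ x
  have ey : iteratedDeriv 2 (fun t : ℝ => solidT p 0 q x t z) y
      = ∑ ν ∈ Finset.range ((p - q.natAbs) / 2 + 1),
          (K * d ν * (z : ℂ) ^ (p - q.natAbs - 2 * ν))
            * SolidAux.FT2 ((x : ℂ)) (-c) ((x : ℂ) ^ 2 + (z : ℂ) ^ 2) q.natAbs ν 0 y := by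
    have e : (fun t : ℝ => solidT p 0 q x t z)
        = fun t : ℝ => ∑ ν ∈ Finset.range ((p - q.natAbs) / 2 + 1),
            (K * d ν * (z : ℂ) ^ (p - q.natAbs - 2 * ν))
              * SolidAux.FT ((x : ℂ)) (-c) ((x : ℂ) ^ 2 + (z : ℂ) ^ 2) q.natAbs ν 0 t := by
      funext t
      simp only [solidT, SolidAux.FT, hcdef, hK, hdd]
      rw [Finset.mul_sum]
      refine Finset.sum_congr rfl fun ν _ => ?_
      push_cast
      ring
    rw [e]
    exact SolidAux.iteratedDeriv_two_sum _ _ _ _ _ _ _ y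
  have ez : iteratedDeriv 2 (fun t : ℝ => solidT p 0 q x y t) z
      = ∑ ν ∈ Finset.range ((p - q.natAbs) / 2 + 1),
          (K * d ν)
            * SolidAux.FT2 ((x : ℂ) - c * (y : ℂ)) 0 ((x : ℂ) ^ 2 + (y : ℂ) ^ 2) q.natAbs ν
              (p - q.natAbs - 2 * ν) z := by
    have e : (fun t : ℝ => solidT p 0 q x y t)
        = fun t : ℝ => ∑ ν ∈ Finset.range ((p - q.natAbs) / 2 + 1),
            (K * d ν)
              * SolidAux.FT ((x : ℂ) - c * (y : ℂ)) 0 ((x : ℂ) ^ 2 + (y : ℂ) ^ 2) q.natAbs ν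
                (p - q.natAbs - 2 * ν) t := by
      funext t
      simp only [solidT, SolidAux.FT, hcdef, hK, hdd]
      rw [Finset.mul_sum]
      refine Finset.sum_congr rfl fun ν _ => ?_
      push_cast
      ring
    rw [e]
    exact SolidAux.iteratedDeriv_two_sum _ _ _ _ _ _ _ z
  rw [ex, ey, ez]
  exact SolidAux.main_aux p q.natAbs hq c K hc x y z d fun ν => rfl
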